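/- Fix an integer m ≥ 2. In the ring ℤ⟦t⟧ of formal power series over ℤ, the identity (Σ_{n ≥ 0} φ(n) t^n) · (1 + Σ_{k=1}^{m-1} (-1)^k (m-k) t^k) = 1 holds; that is, the generating function f^!(t) = Σ_{n ≥ 0} φ(n) t^n is the multiplicative inverse of f(-t), where f(t) = 1 + Σ_{k=1}^{m-1} (m-k) t^k. -/

import Mathlib

/-- `phiNat m n` is the number of sequences `(i₁, …, iₙ)` with entries in `{1, …, m-1}`
(encoded as functions `Fin n → Fin m` with nonzero values) such that no entry is
immediately followed by its successor. -/
noncomputable def phiNat (m n : ℕ) : ℕ :=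
  Nat.card {f : Fin n → Fin m //
    (∀ k, 1 ≤ (f k : ℕ)) ∧
    ∀ (k : ℕ) (hk : k + 1 < n),
      (f ⟨k + 1, hk⟩ : ℕ) ≠ (f ⟨k, Nat.lt_of_succ_lt hk⟩ : ℕ) + 1}

noncomputable def Ecard (m n k : ℕ) : ℕ :=
  Nat.card {f : Fin n → Fin m //
    (∀ i, 1 ≤ (f i : ℕ)) ∧
    (∀ (i : ℕ) (hi : i + 1 < n),
      ((f ⟨i + 1, hi⟩ : ℕ) = (f ⟨i, Nat.lt_of_succ_lt hi⟩ : ℕ) + 1 ↔ i < k)) ∧ k < n}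

noncomputable def Dcard (m n k : ℕ) : ℕ :=
  Nat.card {f : Fin n → Fin m //
    (∀ i, 1 ≤ (f i : ℕ)) ∧
    ∀ (i : ℕ) (hi : i + 1 < n),
      (i + 1 < k → (f ⟨i + 1, hi⟩ : ℕ) = (f ⟨i, Nat.lt_of_succ_lt hi⟩ : ℕ) + 1) ∧
      (k ≤ i → (f ⟨i + 1, hi⟩ : ℕ) ≠ (f ⟨i, Nat.lt_of_succ_lt hi⟩ : ℕ) + 1)}

lemma fcongr {n m : ℕ} (f : Fin n → Fin m) {a b : ℕ} (pa : a < n) (pb : b < n)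
    (h : a = b) : f ⟨a, pa⟩ = f ⟨b, pb⟩ := by subst h; rfl

lemma run_val {m n k : ℕ} (f : Fin n → Fin m)
    (hasc : ∀ (i : ℕ) (hi : i + 1 < n), i < k →
      (f ⟨i + 1, hi⟩ : ℕ) = (f ⟨i, Nat.lt_of_succ_lt hi⟩ : ℕ) + 1) :
    ∀ (i : ℕ) (hi : i < n), i ≤ k →
      (f ⟨i, hi⟩ : ℕ) = (f ⟨0, Nat.lt_of_le_of_lt (Nat.zero_le i) hi⟩ : ℕ) + i := by
  intro i
  induction i with
  | zero => intro hi _; rfl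
  | succ i ih =>
    intro hi hik
    rw [hasc i hi (by omega), ih (Nat.lt_of_succ_lt hi) (by omega)]
    omega

lemma Ecard_eq_zero_right (m n : ℕ) : Ecard m n n = 0 := by
  rw [Ecard]
  have : IsEmpty {f : Fin n → Fin m //
      (∀ i, 1 ≤ (f i : ℕ)) ∧
      (∀ (i : ℕ) (hi : i + 1 < n),
        ((f ⟨i + 1, hi⟩ : ℕ) = (f ⟨i, Nat.lt_of_succ_lt hi⟩ : ℕ) + 1 ↔ i < n)) ∧ n < n} := by
    constructor; rintro ⟨f, _, _, h⟩; omega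
  exact Nat.card_of_isEmpty

lemma Ecard_eq_zero_of_le (m n : ℕ) (hm : 1 ≤ m) (h : m ≤ n) : Ecard m n (m - 1) = 0 := by
  rw [Ecard]
  have : IsEmpty {f : Fin n → Fin m //
      (∀ i, 1 ≤ (f i : ℕ)) ∧
      (∀ (i : ℕ) (hi : i + 1 < n),
        ((f ⟨i + 1, hi⟩ : ℕ) = (f ⟨i, Nat.lt_of_succ_lt hi⟩ : ℕ) + 1 ↔ i < m - 1)) ∧
      m - 1 < n} := by
    constructor
    rintro ⟨f, h1, h2, hlt⟩
    have hrun := run_val f (k := m - 1) (fun i hi hik => (h2 i hi).mpr hik) (m - 1)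
      (by omega) le_rfl
    have := h1 ⟨0, by omega⟩
    have := (f ⟨m - 1, by omega⟩).isLt
    omega
  exact Nat.card_of_isEmpty

def invF (m n k : ℕ) (hkn : k ≤ n) (hkm : k + 1 ≤ m) (a : Fin (m - k))
    (g : Fin (n - k) → Fin m) : Fin n → Fin m := fun i =>
  if h : (i : ℕ) < k then ⟨(a : ℕ) + 1 + i, by have := a.isLt; omega⟩
  else g ⟨(i : ℕ) - k, by have := i.isLt; omega⟩

lemma invF_lt (m n k : ℕ) (hkn : k ≤ n) (hkm : k + 1 ≤ m) (a : Fin (m - k))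
    (g : Fin (n - k) → Fin m) (i : Fin n) (h : (i : ℕ) < k) :
    (invF m n k hkn hkm a g i : ℕ) = (a : ℕ) + 1 + i := by
  simp [invF, dif_pos h]

lemma invF_ge (m n k : ℕ) (hkn : k ≤ n) (hkm : k + 1 ≤ m) (a : Fin (m - k))
    (g : Fin (n - k) → Fin m) (i : Fin n) (h : ¬ (i : ℕ) < k) :
    invF m n k hkn hkm a g i = g ⟨(i : ℕ) - k, by have := i.isLt; omega⟩ := by
  simp [invF, dif_neg h]

lemma invF_pos (m n k : ℕ) (hkn : k ≤ n) (hkm : k + 1 ≤ m) (a : Fin (m - k))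
    (g : Fin (n - k) → Fin m) (hg : ∀ i, 1 ≤ (g i : ℕ)) (i : Fin n) :
    1 ≤ (invF m n k hkn hkm a g i : ℕ) := by
  by_cases h : (i : ℕ) < k
  · rw [invF_lt m n k hkn hkm a g i h]; omega
  · rw [invF_ge m n k hkn hkm a g i h]; exact hg _

lemma invF_cond (m n k : ℕ) (hkn : k ≤ n) (hkm : k + 1 ≤ m) (a : Fin (m - k))
    (g : Fin (n - k) → Fin m)
    (hg : ∀ (i : ℕ) (hi : i + 1 < n - k),
      (g ⟨i + 1, hi⟩ : ℕ) ≠ (g ⟨i, Nat.lt_of_succ_lt hi⟩ : ℕ) + 1) :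
    ∀ (i : ℕ) (hi : i + 1 < n),
      (i + 1 < k → (invF m n k hkn hkm a g ⟨i + 1, hi⟩ : ℕ) =
        (invF m n k hkn hkm a g ⟨i, Nat.lt_of_succ_lt hi⟩ : ℕ) + 1) ∧
      (k ≤ i → (invF m n k hkn hkm a g ⟨i + 1, hi⟩ : ℕ) ≠
        (invF m n k hkn hkm a g ⟨i, Nat.lt_of_succ_lt hi⟩ : ℕ) + 1) := by
  intro i hi
  constructor
  · intro hik
    rw [invF_lt m n k hkn hkm a g _ (by simpa using hik),
      invF_lt m n k hkn hkm a g _ (by simp; omega)]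
    simp only [Fin.val_mk]
    omega
  · intro hik
    rw [invF_ge m n k hkn hkm a g _ (by simp; omega),
      invF_ge m n k hkn hkm a g _ (by simp; omega)]
    have h2 : (⟨(i : ℕ) + 1 - k, by omega⟩ : Fin (n - k)) =
        ⟨((i : ℕ) - k) + 1, by omega⟩ := Fin.ext (by simp; omega)
    simp only [Fin.val_mk] at h2 ⊢
    rw [h2]
    exact hg ((i : ℕ) - k) (by omega)

lemma Dcard_eq (m n k : ℕ) (hk1 : 1 ≤ k) (hkn : k ≤ n) (hkm : k + 1 ≤ m) :
    Dcard m n k = (m - k) * phiNat m (n - k) := by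
  rw [Dcard, phiNat]
  have hcard : ∀ (β : Type) , (m - k) * Nat.card β = Nat.card (Fin (m - k) × β) := by
    intro β
    rw [Nat.card_prod, Nat.card_eq_fintype_card (α := Fin (m - k)), Fintype.card_fin]
  rw [hcard]
  apply Nat.card_congr
  have key : ∀ (f : Fin n → Fin m), ((∀ i, 1 ≤ (f i : ℕ)) ∧
      ∀ (i : ℕ) (hi : i + 1 < n),
        (i + 1 < k → (f ⟨i + 1, hi⟩ : ℕ) = (f ⟨i, Nat.lt_of_succ_lt hi⟩ : ℕ) + 1) ∧
        (k ≤ i → (f ⟨i + 1, hi⟩ : ℕ) ≠ (f ⟨i, Nat.lt_of_succ_lt hi⟩ : ℕ) + 1)) →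
      (∀ (i : ℕ) (hi : i < n), i ≤ k - 1 →
        (f ⟨i, hi⟩ : ℕ) = (f ⟨0, Nat.lt_of_le_of_lt (Nat.zero_le i) hi⟩ : ℕ) + i) := by
    rintro f ⟨h1, h2⟩
    exact run_val f (k := k - 1) (fun i hi hik => (h2 i hi).1 (by omega))
  have f0bound : ∀ (f : Fin n → Fin m), ((∀ i, 1 ≤ (f i : ℕ)) ∧
      ∀ (i : ℕ) (hi : i + 1 < n),
        (i + 1 < k → (f ⟨i + 1, hi⟩ : ℕ) = (f ⟨i, Nat.lt_of_succ_lt hi⟩ : ℕ) + 1) ∧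
        (k ≤ i → (f ⟨i + 1, hi⟩ : ℕ) ≠ (f ⟨i, Nat.lt_of_succ_lt hi⟩ : ℕ) + 1)) →
      (f ⟨0, by omega⟩ : ℕ) - 1 < m - k := by
    intro f hf
    have h1 := hf.1 ⟨0, by omega⟩
    have hrun := key f hf (k - 1) (by omega) le_rfl
    have hlt := (f ⟨k - 1, by omega⟩).isLt
    omega
  have gne : ∀ (f : Fin n → Fin m), ((∀ i, 1 ≤ (f i : ℕ)) ∧
      ∀ (i : ℕ) (hi : i + 1 < n),
        (i + 1 < k → (f ⟨i + 1, hi⟩ : ℕ) = (f ⟨i, Nat.lt_of_succ_lt hi⟩ : ℕ) + 1) ∧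
        (k ≤ i → (f ⟨i + 1, hi⟩ : ℕ) ≠ (f ⟨i, Nat.lt_of_succ_lt hi⟩ : ℕ) + 1)) →
      ∀ (i : ℕ) (hi : i + 1 < n - k),
        (f ⟨k + (i + 1), by omega⟩ : ℕ) ≠ (f ⟨k + i, by omega⟩ : ℕ) + 1 := by
    intro f hf i hi
    exact (hf.2 (k + i) (by omega)).2 (by omega)
  refine
    { toFun := fun x =>
        (⟨(x.1 ⟨0, by omega⟩ : ℕ) - 1, f0bound x.1 x.2⟩,
         ⟨fun i => x.1 ⟨k + i, by have := i.isLt; omega⟩,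
          fun i => x.2.1 _, fun i hi => gne x.1 x.2 i hi⟩)
      invFun := fun y =>
        ⟨invF m n k hkn hkm y.1 y.2.1,
         invF_pos m n k hkn hkm y.1 y.2.1 y.2.2.1,
         invF_cond m n k hkn hkm y.1 y.2.1 y.2.2.2⟩
      left_inv := ?_
      right_inv := ?_ }
  · rintro ⟨f, hf⟩
    apply Subtype.ext
    funext i
    by_cases h : (i : ℕ) < k
    · apply Fin.ext
      rw [invF_lt m n k hkn hkm _ _ i h]
      have h1 := hf.1 ⟨0, by omega⟩
      have hrun := key f hf i i.isLt (by omega)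
      simp only [Fin.val_mk] at *
      rw [show (⟨(i : ℕ), i.isLt⟩ : Fin n) = i from Fin.ext rfl] at hrun
      omega
    · exact (invF_ge m n k hkn hkm _ _ i h).trans (fcongr f _ _ (by simp only [Fin.val_mk]; omega))
  · rintro ⟨a, g, hg⟩
    refine Prod.ext ?_ (Subtype.ext ?_)
    · apply Fin.ext
      simp only
      rw [invF_lt m n k hkn hkm a g ⟨0, by omega⟩ (by simp only [Fin.val_mk]; omega)]
      simp
    · funext i
      exact (invF_ge m n k hkn hkm a g ⟨k + i, by have := i.isLt; omega⟩
        (by simp only [Fin.val_mk]; omega)).trans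
        (congrArg g (Fin.ext (by simp only [Fin.val_mk]; omega)))

lemma card_split {α : Type*} [Fintype α] (P Q : α → Prop) :
    Nat.card {x // P x} = Nat.card {x // P x ∧ Q x} + Nat.card {x // P x ∧ ¬ Q x} := by
  classical
  simp only [Nat.card_eq_fintype_card, Fintype.card_subtype]
  rw [← Finset.card_filter_add_card_filter_not (s := Finset.univ.filter P) (p := Q)]
  congr 1 <;> rw [Finset.filter_filter]

lemma Dcard_split (m n k : ℕ) (hk : k + 1 ≤ n) :
    Dcard m n (k + 1) = Ecard m n k + Ecard m n (k + 1) := by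
  rw [Dcard, card_split _
    (fun f => ∃ h : k + 1 < n, (f ⟨k + 1, h⟩ : ℕ) = (f ⟨k, Nat.lt_of_succ_lt h⟩ : ℕ) + 1),
    add_comm, Ecard, Ecard]
  congr 1
  · apply Nat.card_congr
    apply Equiv.subtypeEquivRight
    intro f
    constructor
    · rintro ⟨⟨h1, h2⟩, hnq⟩
      refine ⟨h1, fun i hi => ⟨fun ha => ?_, fun hik => ?_⟩, by omega⟩
      · by_contra hc
        rcases Nat.lt_trichotomy i k with h' | h' | h'
        · omega
        · subst h'; exact hnq ⟨hi, ha⟩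
        · exact (h2 i hi).2 (by omega) ha
      · exact (h2 i hi).1 (by omega)
    · rintro ⟨h1, h2, hlt⟩
      refine ⟨⟨h1, fun i hi => ⟨fun h' => (h2 i hi).mpr (by omega),
        fun h' ha => by have := (h2 i hi).mp ha; omega⟩⟩, ?_⟩
      rintro ⟨h, hq⟩
      have := (h2 k h).mp hq
      omega
  · apply Nat.card_congr
    apply Equiv.subtypeEquivRight
    intro f
    constructor
    · rintro ⟨⟨h1, h2⟩, h, hq⟩
      refine ⟨h1, fun i hi => ⟨fun ha => ?_, fun hik => ?_⟩, h⟩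
      · by_contra hc
        rcases Nat.lt_trichotomy i k with h' | h' | h'
        · omega
        · subst h'; omega
        · exact (h2 i hi).2 (by omega) ha
      · rcases Nat.lt_trichotomy i k with h' | h' | h'
        · exact (h2 i hi).1 (by omega)
        · subst h'; exact hq
        · omega
    · rintro ⟨h1, h2, hlt⟩
      exact ⟨⟨h1, fun i hi => ⟨fun h' => (h2 i hi).mpr (by omega),
        fun h' ha => by have := (h2 i hi).mp ha; omega⟩⟩,
        hlt, (h2 k hlt).mpr (by omega)⟩

lemma telescope (g : ℕ → ℤ) (K : ℕ) :
    ∑ j ∈ Finset.range (K + 1), (-1 : ℤ) ^ j * (g j + g (j + 1)) =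
      g 0 + (-1) ^ K * g (K + 1) := by
  induction K with
  | zero => simp
  | succ K ih =>
    rw [Finset.sum_range_succ, ih, pow_succ]
    ring

lemma Ecard_zero_eq (m n : ℕ) (hn : 0 < n) : Ecard m n 0 = phiNat m n := by
  rw [Ecard, phiNat]
  apply Nat.card_congr
  apply Equiv.subtypeEquivRight
  intro f
  constructor
  · rintro ⟨h1, h2, _⟩
    exact ⟨h1, fun k hk h => by have := (h2 k hk).mp h; omega⟩
  · rintro ⟨h1, h2⟩
    exact ⟨h1, fun i hi => ⟨fun h => absurd h (h2 i hi), by omega⟩, hn⟩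

lemma phiNat_zero (m : ℕ) : phiNat m 0 = 1 := by
  rw [phiNat, Nat.card_eq_one_iff_unique]
  constructor
  · constructor
    rintro ⟨f, _⟩ ⟨g, _⟩
    ext x
    exact x.elim0
  · exact ⟨⟨fun x => x.elim0, fun x => x.elim0, fun k hk => by omega⟩⟩

/-- `phi m : ℤ → ℤ`, the rank function of the quadratic dual algebra `N_m(R)^!`,
vanishing on negative integers. -/
noncomputable def phi (m : ℕ) (n : ℤ) : ℤ :=
  if n < 0 then 0 else phiNat m n.toNat

lemma phi_nonneg_arg (m : ℕ) (n : ℕ) : phi m (n : ℤ) = phiNat m n := by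
  rw [phi, if_neg (by omega)]
  simp

lemma phi_neg_arg (m : ℕ) (n : ℤ) (h : n < 0) : phi m n = 0 := if_pos h

lemma recurrence (m n : ℕ) (hm : 2 ≤ m) (hn : 1 ≤ n) :
    (phiNat m n : ℤ) = ∑ k ∈ Finset.Icc 1 (m - 1),
      (-1 : ℤ) ^ (k + 1) * ((m : ℤ) - k) * phi m ((n : ℤ) - k) := by
  set K := min (m - 1) n with hK
  have hK1 : 1 ≤ K := by omega
  have hKn : K ≤ n := by omega
  rw [← Finset.sum_subset (Finset.Icc_subset_Icc le_rfl (by omega : K ≤ m - 1))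
    (fun k hk hk' => ?_)]
  · -- main sum over Icc 1 K
    have hterm : ∀ k ∈ Finset.Icc 1 K,
        (-1 : ℤ) ^ (k + 1) * ((m : ℤ) - k) * phi m ((n : ℤ) - k) =
        (-1 : ℤ) ^ (k + 1) * (Dcard m n k : ℤ) := by
      intro k hk
      simp only [Finset.mem_Icc] at hk
      rw [Dcard_eq m n k hk.1 (by omega) (by omega)]
      rw [phi, if_neg (by omega)]
      have : ((n : ℤ) - k).toNat = n - k := by omega
      rw [this]
      push_cast [Nat.cast_sub (by omega : k ≤ m)]
      ring
    rw [Finset.sum_congr rfl hterm]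
    have hsplit : ∀ k ∈ Finset.Icc 1 K,
        (-1 : ℤ) ^ (k + 1) * (Dcard m n k : ℤ) =
        (-1 : ℤ) ^ (k + 1) * ((Ecard m n (k - 1) : ℤ) + (Ecard m n k : ℤ)) := by
      intro k hk
      simp only [Finset.mem_Icc] at hk
      obtain ⟨k, rfl⟩ : ∃ j, k = j + 1 := ⟨k - 1, by omega⟩
      rw [Dcard_split m n k (by omega)]
      push_cast
      simp
    rw [Finset.sum_congr rfl hsplit, ← Finset.Ico_add_one_right_eq_Icc, Finset.sum_Ico_eq_sum_range]
    have : K + 1 - 1 = (K - 1) + 1 := by omega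
    rw [this]
    have hre : ∀ j ∈ Finset.range ((K - 1) + 1),
        (-1 : ℤ) ^ ((1 + j) + 1) * ((Ecard m n ((1 + j) - 1) : ℤ) + (Ecard m n (1 + j) : ℤ)) =
        (-1 : ℤ) ^ j * ((Ecard m n j : ℤ) + (Ecard m n (j + 1) : ℤ)) := by
      intro j _
      have h1 : (1 + j) - 1 = j := by omega
      have h2 : 1 + j = j + 1 := by omega
      rw [h1, h2, pow_succ, pow_succ]
      ring
    rw [Finset.sum_congr rfl hre, telescope (fun j => (Ecard m n j : ℤ)) (K - 1)]
    have hEK : Ecard m n ((K - 1) + 1) = 0 := by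
      have : (K - 1) + 1 = K := by omega
      rw [this]
      rcases Nat.lt_or_ge (m - 1) n with h | h
      · have : K = m - 1 := by omega
        rw [this]
        exact Ecard_eq_zero_of_le m n (by omega) (by omega)
      · rcases Nat.eq_or_lt_of_le hKn with h' | h'
        · rw [h']
          exact Ecard_eq_zero_right m n
        · have : K = m - 1 := by omega
          rw [this]
          exact Ecard_eq_zero_of_le m n (by omega) (by omega)
    rw [hEK, Ecard_zero_eq m n (by omega)]
    simp
  · -- terms with K < k ≤ m - 1 vanish
    simp only [Finset.mem_Icc] at hk hk'
    have hkn : n < k := by omega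
    rw [phi_neg_arg m _ (by omega)]
    ring

/-- **Proposition (Itagaki–Nakamoto–Torii).**
In `ℤ⟦t⟧` one has `f^!(t) · f(-t) = 1`, where `f^!(t) = ∑_{n ≥ 0} φ(n) tⁿ` and
`f(-t) = 1 + ∑_{k=1}^{m-1} (-1)^k (m-k) t^k`. -/
theorem stmt_3 (m : ℕ) (hm : 2 ≤ m) :
    (PowerSeries.mk fun n : ℕ => phi m (n : ℤ)) *
        (1 + ∑ k ∈ Finset.Icc 1 (m - 1),
          (PowerSeries.C : ℤ →+* PowerSeries ℤ) ((-1) ^ k * ((m : ℤ) - (k : ℤ))) * PowerSeries.X ^ k) = 1 := by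
  ext n
  rw [mul_add, mul_one, Finset.mul_sum, map_add, map_sum, PowerSeries.coeff_mk,
    PowerSeries.coeff_one]
  have hterm : ∀ k ∈ Finset.Icc 1 (m - 1),
      (PowerSeries.coeff n) ((PowerSeries.mk fun n : ℕ => phi m (n : ℤ)) *
        ((PowerSeries.C : ℤ →+* PowerSeries ℤ) ((-1) ^ k * ((m : ℤ) - (k : ℤ))) * PowerSeries.X ^ k)) =
      (-1 : ℤ) ^ k * ((m : ℤ) - k) * phi m ((n : ℤ) - k) := by
    intro k hk
    simp only [Finset.mem_Icc] at hk
    rw [show (PowerSeries.mk fun n : ℕ => phi m (n : ℤ)) *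
        ((PowerSeries.C : ℤ →+* PowerSeries ℤ) ((-1) ^ k * ((m : ℤ) - (k : ℤ))) * PowerSeries.X ^ k) =
        ((PowerSeries.C : ℤ →+* PowerSeries ℤ) ((-1) ^ k * ((m : ℤ) - (k : ℤ))) *
          (PowerSeries.mk fun n : ℕ => phi m (n : ℤ))) * PowerSeries.X ^ k by ring,
      PowerSeries.coeff_mul_X_pow', PowerSeries.coeff_C_mul]
    split_ifs with h
    · rw [PowerSeries.coeff_mk]
      have : ((n - k : ℕ) : ℤ) = (n : ℤ) - k := by omega
      rw [this]
    · rw [phi_neg_arg m _ (by omega)]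
      ring
  rw [Finset.sum_congr rfl hterm]
  by_cases hn : n = 0
  · subst hn
    rw [if_pos rfl, Finset.sum_eq_zero (fun k hk => ?_)]
    · rw [phi_nonneg_arg, phiNat_zero]
      norm_num
    · simp only [Finset.mem_Icc] at hk
      rw [phi_neg_arg m _ (by omega)]
      ring
  · rw [if_neg hn]
    have hrec := recurrence m n hm (by omega)
    rw [phi_nonneg_arg, hrec]
    rw [show ∑ k ∈ Finset.Icc 1 (m - 1), (-1 : ℤ) ^ k * ((m : ℤ) - k) * phi m ((n : ℤ) - k) =
      - ∑ k ∈ Finset.Icc 1 (m - 1), (-1 : ℤ) ^ (k + 1) * ((m : ℤ) - k) * phi m ((n : ℤ) - k) by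
        rw [← Finset.sum_neg_distrib]
        exact Finset.sum_congr rfl (fun k _ => by rw [pow_succ]; ring)]
    ring
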